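/- arXiv:math/0005311 — 3 statements merged into one kernel-verified Lean document; each statement's English description precedes it below -/
import Mathlib

section
/- Let G be a profinite group and G_1, …, G_n closed subgroups which topologically generate G. Suppose each finite embedding problem for (G, G_1, …, G_n) has a solution. Then G is the free profinite product of G_1, …, G_n. -/
section

variable {n : ℕ} {G : Type} [Group G] [TopologicalSpace G] [IsTopologicalGroup G]
  (D : Fin n → Subgroup G)
  {A B : Type} [Group A] [TopologicalSpace A] [IsTopologicalGroup A]
  [Group B] [TopologicalSpace B] [IsTopologicalGroup B]

/-- `(φ : G → A, ψ : B → A, E 1, …, E n)` is an embedding problem for `(G, D 1, …, D n)`: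
`φ, ψ` are continuous epimorphisms, the `E i` are closed subgroups of `B` which topologically
generate `B`, and `ψ` maps `E i` isomorphically onto `φ(D i)` for each `i`. -/
def IsEmbeddingProblem (φ : G →* A) (ψ : B →* A) (E : Fin n → Subgroup B) : Prop :=
  Continuous φ ∧ Function.Surjective φ ∧ Continuous ψ ∧ Function.Surjective ψ ∧
  (∀ i, IsClosed (E i : Set B)) ∧ (⨆ i, E i).topologicalClosure = ⊤ ∧
  ∀ i, Set.BijOn ψ (E i) (φ '' (D i))

/-- `γ` is a solution of the embedding problem `(φ, ψ, E 1, …, E n)`: a continuous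
epimorphism `γ : G → B` with `ψ ∘ γ = φ` and `γ(D i) = E i` for each `i`. -/
def IsEPSolution (φ : G →* A) (ψ : B →* A) (E : Fin n → Subgroup B) (γ : G →* B) : Prop :=
  Continuous γ ∧ Function.Surjective γ ∧ (∀ x, ψ (γ x) = φ x) ∧
  ∀ i, (D i).map γ = E i

end

/-- `G` with closed subgroups `D i` is the free profinite product of the `D i`. -/
def IsFreeProfiniteProduct {n : ℕ} (G : Type) [Group G] [TopologicalSpace G]
    [IsTopologicalGroup G] (D : Fin n → Subgroup G) : Prop :=
  (∀ i, IsClosed (D i : Set G)) ∧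
  (⨆ i, D i).topologicalClosure = ⊤ ∧
  ∀ (H : Type) [Group H] [TopologicalSpace H] [IsTopologicalGroup H] [CompactSpace H]
      [T2Space H] [TotallyDisconnectedSpace H]
    (η : ∀ i, ↥(D i) →* H), (∀ i, Continuous (η i)) →
    ∃! φ : G →* H, Continuous φ ∧ ∀ i (x : ↥(D i)), φ x = η i x

section Aux

/-- In a profinite group, every open neighborhood of `1` contains an open normal subgroup. -/
lemma aux_exists_openNormal {G : Type*} [Group G] [TopologicalSpace G] [IsTopologicalGroup G]
    [CompactSpace G] [T2Space G] [TotallyDisconnectedSpace G] {W : Set G}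
    (hW : IsOpen W) (h1 : (1 : G) ∈ W) :
    ∃ N : OpenNormalSubgroup G, (N : Set G) ⊆ W := by
  obtain ⟨V, hV, h1V, hVW⟩ := compact_exists_isClopen_in_isOpen hW h1
  obtain ⟨N, hN⟩ := IsTopologicalGroup.exist_openNormalSubgroup_sub_clopen_nhds_of_one hV h1V
  exact ⟨N, hN.trans hVW⟩

lemma aux_mem_iSup_subgroupOf {P : Type*} [Group P] {ι : Sort*} (S : ι → Subgroup P)
    (K : Subgroup P) (hK : ∀ i, S i ≤ K) {x : P} (hx : x ∈ ⨆ i, S i) :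
    ∃ hxK : x ∈ K, (⟨x, hxK⟩ : K) ∈ ⨆ i, (S i).subgroupOf K := by
  refine Subgroup.iSup_induction
    (C := fun y => ∃ hyK : y ∈ K, (⟨y, hyK⟩ : K) ∈ ⨆ i, (S i).subgroupOf K) S hx ?_ ?_ ?_
  · intro i y hy
    exact ⟨hK i hy, Subgroup.mem_iSup_of_mem i (by simpa [Subgroup.mem_subgroupOf] using hy)⟩
  · exact ⟨one_mem K, one_mem _⟩
  · rintro a b ⟨ha, ha'⟩ ⟨hb, hb'⟩
    exact ⟨mul_mem ha hb, mul_mem ha' hb'⟩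

/-- Two continuous homomorphisms into a Hausdorff group agreeing on a family of subgroups
which topologically generate the source are equal. -/
lemma aux_eq_of_agree {P H : Type*} [Group P] [TopologicalSpace P] [IsTopologicalGroup P]
    [Group H] [TopologicalSpace H] {ι : Sort*} [T2Space H] (S : ι → Subgroup P)
    (hgen : (⨆ i, S i).topologicalClosure = ⊤) {f g : P →* H}
    (hf : Continuous f) (hg : Continuous g) (h : ∀ i, ∀ x ∈ S i, f x = g x) : f = g := by
  have hle : (⨆ i, S i).topologicalClosure ≤ f.eqLocus g :=
    Subgroup.topologicalClosure_minimal _ (iSup_le fun i x hx => h i x hx) (isClosed_eq hf hg)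
  ext x
  exact hle (by rw [hgen]; trivial)

lemma aux_quotient_discrete {H : Type*} [Group H] [TopologicalSpace H] [IsTopologicalGroup H]
    (U : Subgroup H) [U.Normal] (hU : IsOpen (U : Set H)) :
    DiscreteTopology (H ⧸ U) := by
  apply discreteTopology_of_isOpen_singleton_one
  have h : ((↑) '' (U : Set H) : Set (H ⧸ U)) = {1} := by
    ext x
    simp only [Set.mem_image, Set.mem_singleton_iff]
    constructor
    · rintro ⟨y, hy, rfl⟩
      exact (QuotientGroup.eq_one_iff y).2 hy
    · rintro rfl
      exact ⟨1, one_mem U, rfl⟩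
  rw [← h]
  exact QuotientGroup.isOpenMap_coe (N := U) _ hU

end Aux

section Finite

variable {n : ℕ} {G : Type} [Group G] [TopologicalSpace G] [IsTopologicalGroup G]
  [CompactSpace G] [T2Space G] [TotallyDisconnectedSpace G]

/-- The finite case: any family of continuous homomorphisms of the `D i` into a finite
discrete group extends to a continuous homomorphism of `G`. -/
lemma aux_extend_finite (D : Fin n → Subgroup G)
    (hgen : (⨆ i, D i).topologicalClosure = ⊤)
    (hsolve : ∀ (A B : Type) [Group A] [TopologicalSpace A] [IsTopologicalGroup A]
        [CompactSpace A] [T2Space A] [TotallyDisconnectedSpace A]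
        [Group B] [TopologicalSpace B] [IsTopologicalGroup B]
        [CompactSpace B] [T2Space B] [TotallyDisconnectedSpace B] [Finite B]
        (φ : G →* A) (ψ : B →* A) (E : Fin n → Subgroup B),
        IsEmbeddingProblem D φ ψ E → ∃ γ : G →* B, IsEPSolution D φ ψ E γ)
    (F : Type) [Group F] [TopologicalSpace F] [IsTopologicalGroup F] [Finite F]
    [DiscreteTopology F] (η : ∀ i, ↥(D i) →* F) (hη : ∀ i, Continuous (η i)) :
    ∃ φ : G →* F, Continuous φ ∧ ∀ i (x : ↥(D i)), φ x = η i x := by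
  classical
  -- Step 1: choose an open normal subgroup N with D i ∩ N ⊆ ker (η i) for all i
  have hWex : ∀ i, ∃ W : Set G, IsOpen W ∧ (1 : G) ∈ W ∧
      ∀ x : ↥(D i), (x : G) ∈ W → η i x = 1 := by
    intro i
    have hopen : IsOpen ((η i) ⁻¹' {1}) := (isOpen_discrete _).preimage (hη i)
    rw [isOpen_induced_iff] at hopen
    obtain ⟨W, hWopen, hWeq⟩ := hopen
    refine ⟨W, hWopen, ?_, ?_⟩
    · have h1 : (⟨1, one_mem _⟩ : ↥(D i)) ∈ ((↑) ⁻¹' W : Set ↥(D i)) := by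
        rw [hWeq]
        show η i _ ∈ ({1} : Set F)
        rw [Set.mem_singleton_iff]
        exact map_one (η i)
      exact h1
    · intro x hx
      have hx' : x ∈ ((↑) ⁻¹' W : Set ↥(D i)) := hx
      rw [hWeq] at hx'
      exact hx'
  choose W hWopen hW1 hWker using hWex
  obtain ⟨N, hN⟩ := aux_exists_openNormal (G := G) (isOpen_iInter_of_finite hWopen)
    (Set.mem_iInter.2 hW1)
  set Nsub := N.toSubgroup with hNsubdef
  have hNker : ∀ i (x : ↥(D i)), (x : G) ∈ Nsub → η i x = 1 := by
    intro i x hx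
    exact hWker i x (Set.mem_iInter.1 (hN hx) i)
  -- instances on the quotient A = G ⧸ N
  haveI : DiscreteTopology (G ⧸ Nsub) := aux_quotient_discrete Nsub N.isOpen
  haveI : Finite (G ⧸ Nsub) := Subgroup.quotient_finite_of_isOpen Nsub N.isOpen
  -- Step 2: construct the finite group B inside (G ⧸ N) × F
  set q : G →* G ⧸ Nsub := QuotientGroup.mk' Nsub with hqdef
  set gih : ∀ i : Fin n, ↥(D i) →* (G ⧸ Nsub) × F :=
    fun i => (q.comp (D i).subtype).prod (η i) with hgihdef
  set Btop : Subgroup ((G ⧸ Nsub) × F) := ⨆ i, (gih i).range with hBtopdef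
  set E : Fin n → Subgroup ↥Btop := fun i => ((gih i).range).subgroupOf Btop with hEdef
  set ψ : ↥Btop →* G ⧸ Nsub := (MonoidHom.fst _ _).comp Btop.subtype with hψdef
  have hrange_le : ∀ i, (gih i).range ≤ Btop := fun i => le_iSup (fun i => (gih i).range) i
  -- density: every element of G ⧸ N is hit from ⨆ D i
  have hdense : ∀ a : G ⧸ Nsub, ∃ x ∈ ⨆ i, D i, q x = a := by
    intro a
    obtain ⟨g, rfl⟩ := QuotientGroup.mk'_surjective Nsub a
    have hg : g ∈ closure ((⨆ i, D i : Subgroup G) : Set G) := by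
      have hmem : g ∈ ((⨆ i, D i).topologicalClosure : Set G) := by rw [hgen]; trivial
      exact hmem
    have himg : q g ∈ closure (q '' ((⨆ i, D i : Subgroup G) : Set G)) :=
      image_closure_subset_closure_image continuous_quot_mk ⟨g, hg, rfl⟩
    rw [IsClosed.closure_eq (isClosed_discrete _)] at himg
    obtain ⟨x, hx, hxg⟩ := himg
    exact ⟨x, hx, hxg⟩
  have hEinj : ∀ i (z₁ z₂ : ↥(D i)), q z₁ = q z₂ → η i z₁ = η i z₂ := by
    intro i z₁ z₂ hq12
    have hw : ((z₁⁻¹ * z₂ : ↥(D i)) : G) ∈ Nsub := by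
      rw [← QuotientGroup.eq_one_iff]
      have : q ((z₁ : G)⁻¹ * z₂) = (q z₁)⁻¹ * q z₂ := by
        rw [map_mul, map_inv]
      rw [hq12] at this
      simpa [q] using this
    have h1 : η i (z₁⁻¹ * z₂) = 1 := hNker i _ hw
    rw [map_mul, map_inv] at h1
    exact (inv_mul_eq_one.1 h1)
  have hEP : IsEmbeddingProblem D q ψ E := by
    refine ⟨continuous_quot_mk, QuotientGroup.mk'_surjective Nsub,
      continuous_fst.comp continuous_subtype_val, ?_, fun i => isClosed_discrete _, ?_, ?_⟩
    · -- surjectivity of ψ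
      intro a
      obtain ⟨x, hx, hxa⟩ := hdense a
      have hBmap : Btop.map (MonoidHom.fst _ _) = (⨆ i, D i).map q := by
        rw [hBtopdef, Subgroup.map_iSup, Subgroup.map_iSup]
        refine iSup_congr fun i => ?_
        rw [MonoidHom.map_range]
        have hcomp : (MonoidHom.fst (G ⧸ Nsub) F).comp (gih i) = q.comp (D i).subtype := rfl
        rw [hcomp, MonoidHom.range_comp, Subgroup.range_subtype]
      have hmem : a ∈ Btop.map (MonoidHom.fst _ _) := by
        rw [hBmap]
        exact ⟨x, hx, hxa⟩
      obtain ⟨b, hbB, hb⟩ := hmem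
      exact ⟨⟨b, hbB⟩, hb⟩
    · -- topological generation
      have hEtop : (⨆ i, E i) = ⊤ := by
        rw [eq_top_iff]
        rintro ⟨x, hx⟩ -
        obtain ⟨hxK, hmem⟩ := aux_mem_iSup_subgroupOf (fun i => (gih i).range) Btop hrange_le hx
        exact hmem
      rw [hEtop]
      exact le_antisymm le_top (Subgroup.le_topologicalClosure ⊤)
    · -- bijections
      intro i
      refine ⟨?_, ?_, ?_⟩
      · rintro b hb
        obtain ⟨z, hz⟩ := Subgroup.mem_subgroupOf.1 hb
        refine ⟨z, z.2, ?_⟩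
        show q (z : G) = ψ b
        rw [show ψ b = ((b : (G ⧸ Nsub) × F)).1 from rfl, ← hz]
        rfl
      · rintro b₁ hb₁ b₂ hb₂ heq
        obtain ⟨z₁, hz₁⟩ := Subgroup.mem_subgroupOf.1 hb₁
        obtain ⟨z₂, hz₂⟩ := Subgroup.mem_subgroupOf.1 hb₂
        have hq12 : q z₁ = q z₂ := by
          have e1 : ψ b₁ = q z₁ := by
            rw [show ψ b₁ = ((b₁ : (G ⧸ Nsub) × F)).1 from rfl, ← hz₁]; rfl
          have e2 : ψ b₂ = q z₂ := by
            rw [show ψ b₂ = ((b₂ : (G ⧸ Nsub) × F)).1 from rfl, ← hz₂]; rfl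
          rw [← e1, ← e2, heq]
        have hη12 : η i z₁ = η i z₂ := hEinj i z₁ z₂ hq12
        apply Subtype.ext
        rw [← hz₁, ← hz₂]
        show (q z₁, η i z₁) = (q z₂, η i z₂)
        rw [hq12, hη12]
      · rintro a ⟨x, hx, rfl⟩
        refine ⟨⟨gih i ⟨x, hx⟩, hrange_le i ⟨⟨x, hx⟩, rfl⟩⟩,
          Subgroup.mem_subgroupOf.2 ⟨⟨x, hx⟩, rfl⟩, rfl⟩
  obtain ⟨γ, hγc, hγs, hγψ, hγD⟩ := hsolve (G ⧸ Nsub) ↥Btop q ψ E hEP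
  refine ⟨((MonoidHom.snd _ F).comp Btop.subtype).comp γ,
    (continuous_snd.comp continuous_subtype_val).comp hγc, ?_⟩
  intro i x
  have hmemE : γ (x : G) ∈ E i := by
    rw [← hγD i]
    exact ⟨(x : G), x.2, rfl⟩
  obtain ⟨z, hz⟩ := Subgroup.mem_subgroupOf.1 hmemE
  have hq1 : q z = q x := by
    have e1 : ψ (γ (x : G)) = q z := by
      rw [show ψ (γ (x : G)) = ((γ (x : G) : (G ⧸ Nsub) × F)).1 from rfl, ← hz]; rfl
    rw [← e1, hγψ]
  have hη1 : η i z = η i x := hEinj i z x hq1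
  show ((γ (x : G) : (G ⧸ Nsub) × F)).2 = η i x
  rw [← hz, ← hη1]
  rfl

end Finite

theorem stmt2 {n : ℕ} (G : Type) [Group G] [TopologicalSpace G] [IsTopologicalGroup G]
    [CompactSpace G] [T2Space G] [TotallyDisconnectedSpace G]
    (D : Fin n → Subgroup G)
    (hclosed : ∀ i, IsClosed (D i : Set G))
    (hgen : (⨆ i, D i).topologicalClosure = ⊤)
    (hsolve : ∀ (A B : Type) [Group A] [TopologicalSpace A] [IsTopologicalGroup A]
        [CompactSpace A] [T2Space A] [TotallyDisconnectedSpace A]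
        [Group B] [TopologicalSpace B] [IsTopologicalGroup B]
        [CompactSpace B] [T2Space B] [TotallyDisconnectedSpace B] [Finite B]
        (φ : G →* A) (ψ : B →* A) (E : Fin n → Subgroup B),
        IsEmbeddingProblem D φ ψ E → ∃ γ : G →* B, IsEPSolution D φ ψ E γ) :
    IsFreeProfiniteProduct G D := by
  refine ⟨hclosed, hgen, ?_⟩
  intro H _ _ _ _ _ _ η hη
  -- the closed subgroup of G × H generated by the graphs of the η i
  set gih : ∀ i : Fin n, ↥(D i) →* G × H := fun i => (D i).subtype.prod (η i) with hgihdef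
  set Γ : Subgroup (G × H) := (⨆ i, (gih i).range).topologicalClosure with hΓdef
  have hΓclosed : IsClosed (Γ : Set (G × H)) := Subgroup.isClosed_topologicalClosure _
  haveI : CompactSpace ↥Γ := isCompact_iff_compactSpace.1 hΓclosed.isCompact
  set p₁ : ↥Γ →* G := (MonoidHom.fst G H).comp Γ.subtype with hp₁def
  have hp₁c : Continuous p₁ := continuous_fst.comp continuous_subtype_val
  have hgraph_mem : ∀ i (x : ↥(D i)), ((x : G), η i x) ∈ Γ := fun i x =>
    Subgroup.le_topologicalClosure _ (Subgroup.mem_iSup_of_mem i ⟨x, rfl⟩)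
  -- surjectivity of p₁
  have hp₁s : Function.Surjective p₁ := by
    have hmapclosed : IsClosed ((Γ.map (MonoidHom.fst G H)) : Set G) := by
      rw [Subgroup.coe_map]
      exact (hΓclosed.isCompact.image continuous_fst).isClosed
    have hle : (⨆ i, D i) ≤ Γ.map (MonoidHom.fst G H) := by
      refine iSup_le fun i x hx => ?_
      exact ⟨((x : G), η i ⟨x, hx⟩), hgraph_mem i ⟨x, hx⟩, rfl⟩
    have htop : (⊤ : Subgroup G) ≤ Γ.map (MonoidHom.fst G H) := by
      rw [← hgen]
      exact Subgroup.topologicalClosure_minimal _ hle hmapclosed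
    intro g
    obtain ⟨b, hbΓ, hb⟩ := htop (Subgroup.mem_top g)
    exact ⟨⟨b, hbΓ⟩, hb⟩
  -- injectivity of p₁
  have hp₁i : Function.Injective p₁ := by
    rw [injective_iff_map_eq_one]
    rintro ⟨⟨g, h⟩, hmem⟩ h1
    have hg : g = 1 := h1
    subst hg
    have hh : h = 1 := by
      by_contra hne
      obtain ⟨U, hU⟩ := aux_exists_openNormal (G := H)
        (isOpen_compl_singleton : IsOpen ({h}ᶜ : Set H)) (by simpa using (Ne.symm hne))
      set Usub := U.toSubgroup with hUsubdef
      haveI : DiscreteTopology (H ⧸ Usub) := aux_quotient_discrete Usub U.isOpen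
      haveI : Finite (H ⧸ Usub) := Subgroup.quotient_finite_of_isOpen Usub U.isOpen
      haveI hTG : IsTopologicalGroup (H ⧸ Usub) := QuotientGroup.instIsTopologicalGroup Usub
      set π : H →* H ⧸ Usub := QuotientGroup.mk' Usub with hπdef
      obtain ⟨θ, hθc, hθ⟩ := @aux_extend_finite _ _ _ _ _ _ _ _ D hgen hsolve (H ⧸ Usub) _ _ hTG _ _
        (fun i => π.comp (η i)) (fun i => continuous_quot_mk.comp (hη i))
      -- Γ is contained in the equalizer of θ ∘ fst and π ∘ snd
      have hΓle : Γ ≤ MonoidHom.eqLocus (θ.comp (MonoidHom.fst G H))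
          (π.comp (MonoidHom.snd G H)) := by
        refine Subgroup.topologicalClosure_minimal _ (iSup_le fun i => ?_)
          (isClosed_eq (hθc.comp continuous_fst) (continuous_quot_mk.comp continuous_snd))
        rintro ⟨a, b⟩ ⟨z, hz⟩
        have hz1 : (z : G) = a := congrArg Prod.fst hz
        have hz2 : η i z = b := congrArg Prod.snd hz
        show θ a = π b
        rw [← hz1, ← hz2]
        exact hθ i z
      have heq : θ 1 = π h := hΓle hmem
      rw [map_one] at heq
      have : h ∈ Usub := (QuotientGroup.eq_one_iff h).1 heq.symm
      exact hU this rfl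
    subst hh
    rfl
  -- p₁ is a topological isomorphism
  set e : ↥Γ ≃* G := MulEquiv.ofBijective p₁ ⟨hp₁i, hp₁s⟩ with hedef
  have hec : Continuous e := hp₁c
  set homeo : ↥Γ ≃ₜ G := Continuous.homeoOfEquivCompactToT2 (f := e.toEquiv) hec with hhdef
  set p₂ : ↥Γ →* H := (MonoidHom.snd G H).comp Γ.subtype with hp₂def
  set φ : G →* H := p₂.comp e.symm.toMonoidHom with hφdef
  have hφc : Continuous φ := by
    have hsymm : Continuous (⇑e.symm) := homeo.symm.continuous
    exact (continuous_snd.comp continuous_subtype_val).comp hsymm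
  have hφx : ∀ i (x : ↥(D i)), φ (x : G) = η i x := by
    intro i x
    have hsymmx : e.symm (x : G) = ⟨((x : G), η i x), hgraph_mem i x⟩ := by
      apply e.injective
      rw [MulEquiv.apply_symm_apply]
      rfl
    show p₂ (e.symm (x : G)) = η i x
    rw [hsymmx]
    rfl
  refine ⟨φ, ⟨hφc, hφx⟩, ?_⟩
  rintro φ' ⟨hφ'c, hφ'x⟩
  refine aux_eq_of_agree D hgen hφ'c hφc ?_
  intro i x hx
  rw [hφ'x i ⟨x, hx⟩, hφx i ⟨x, hx⟩]
end

section
/- Let G be a profinite group and G_1, …, G_n closed subgroups which topologically generate G. Suppose every finite embedding problem for (G, G_1, …, G_n) has a solution. Then every embedding problem (φ : G → A, ψ : B → A, B_1, …, B_n) for (G, G_1, …, G_n) in which A is finite (but B is an arbitrary profinite group) has a solution. -/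
structure PS {n : ℕ} {G A B : Type} [Group G] [Group A] [Group B]
    [TopologicalSpace G] [TopologicalSpace B]
    (D : Fin n → Subgroup G) (φ : G →* A) (ψ : B →* A) (E : Fin n → Subgroup B)
    (s : Set (G × B)) : Prop where
  (exists_subgroup : ∃ Γ : Subgroup (G × B), (Γ : Set (G × B)) = s)
  (closed : IsClosed s)
  (compat : ∀ p ∈ s, ψ p.2 = φ p.1)
  (total : ∀ g : G, ∃ b : B, (g, b) ∈ s)
  (memmul : ∀ i : Fin n, ∀ p ∈ s, p.1 ∈ D i → ∃ e ∈ E i, ((1 : G), e⁻¹ * p.2) ∈ s)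
  (lifte : ∀ i : Fin n, ∀ e ∈ E i, ∃ g ∈ D i, (g, e) ∈ s)

lemma PS.snd_surj {n : ℕ} {G A B : Type} [Group G] [Group A] [Group B]
    [TopologicalSpace G] [TopologicalSpace B] [IsTopologicalGroup B]
    [CompactSpace G] [CompactSpace B] [T2Space B]
    {D : Fin n → Subgroup G} {φ : G →* A} {ψ : B →* A} {E : Fin n → Subgroup B}
    {s : Set (G × B)}
    (hEgen : (⨆ i, E i).topologicalClosure = ⊤) (hs : PS D φ ψ E s) :
    ∀ b : B, ∃ g : G, (g, b) ∈ s := by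
  obtain ⟨Γ, hΓ⟩ := hs.exists_subgroup
  have hmem : ∀ p : G × B, p ∈ Γ ↔ p ∈ s := fun p => by rw [← hΓ]; rfl
  set P : Subgroup B := Γ.map (MonoidHom.snd G B) with hP
  have hPclosed : IsClosed (P : Set B) := by
    have hcs : IsCompact s := hs.closed.isCompact
    have : (P : Set B) = Prod.snd '' s := by
      rw [hP, Subgroup.coe_map, hΓ]; rfl
    rw [this]
    exact (hcs.image continuous_snd).isClosed
  have hEP : ∀ i, E i ≤ P := by
    intro i e he
    obtain ⟨g, -, hg⟩ := hs.lifte i e he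
    exact ⟨(g, e), (hmem _).mpr hg, rfl⟩
  have htop : (⊤ : Subgroup B) ≤ P := by
    rw [← hEgen]
    exact Subgroup.topologicalClosure_minimal _ (iSup_le hEP) hPclosed
  intro b
  obtain ⟨p, hp, hp2⟩ := htop (Subgroup.mem_top b)
  exact ⟨p.1, by rw [← hΓ]; simpa [← hp2] using hp⟩

section ChainBase
variable {n : ℕ} {G A B : Type} [Group G] [Group A] [Group B]
    [TopologicalSpace G] [TopologicalSpace B] [TopologicalSpace A]
    {D : Fin n → Subgroup G} {φ : G →* A} {ψ : B →* A} {E : Fin n → Subgroup B}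

lemma PS_base [T2Space A] (hφc : Continuous φ) (hψc : Continuous ψ)
    (hψs : Function.Surjective ψ)
    (hbij : ∀ i, Set.BijOn ψ (E i) (φ '' (D i))) :
    PS D φ ψ E {p : G × B | ψ p.2 = φ p.1} := by
  have hsub : ∃ Γ : Subgroup (G × B), (Γ : Set (G × B)) = {p : G × B | ψ p.2 = φ p.1} := by
    refine ⟨{ carrier := {p : G × B | ψ p.2 = φ p.1}
              one_mem' := by simp
              mul_mem' := ?_
              inv_mem' := ?_ }, rfl⟩
    · intro a b ha hb
      simp only [Set.mem_setOf_eq] at *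
      simp [Prod.fst_mul, Prod.snd_mul, map_mul, ha, hb]
    · intro a ha
      simp only [Set.mem_setOf_eq] at *
      simp [ha]
  constructor
  · exact hsub
  · exact isClosed_eq (hψc.comp continuous_snd) (hφc.comp continuous_fst)
  · exact fun p hp => hp
  · intro g
    obtain ⟨b, hb⟩ := hψs (φ g)
    exact ⟨b, hb⟩
  · intro i p hp hpD
    have h1 : ψ p.2 ∈ ψ '' (E i) := by
      rw [(hbij i).image_eq]
      exact hp ▸ Set.mem_image_of_mem φ hpD
    obtain ⟨e, he, heq⟩ := h1
    refine ⟨e, he, ?_⟩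
    simp only [Set.mem_setOf_eq, map_mul, map_inv, heq, map_one]
    group
  · intro i e he
    have h1 : ψ e ∈ φ '' (D i) := by rw [← (hbij i).image_eq]; exact Set.mem_image_of_mem ψ he
    obtain ⟨g, hg, hgeq⟩ := h1
    exact ⟨g, hg, hgeq.symm⟩

lemma PS_sInter [T2Space G] [T2Space B] [CompactSpace G] [CompactSpace B] [IsTopologicalGroup B]
    (hDcl : ∀ i, IsClosed (D i : Set G)) (hEcl : ∀ i, IsClosed (E i : Set B))
    {c : Set (Set (G × B))} (hc : ∀ s ∈ c, PS D φ ψ E s) (hchain : IsChain (· ⊆ ·) c)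
    (hne : c.Nonempty) : PS D φ ψ E (⋂₀ c) := by
  haveI : Nonempty ↥c := hne.to_subtype
  have hmemInt : ∀ p : G × B, p ∈ ⋂₀ c ↔ ∀ t : c, p ∈ (t : Set (G × B)) := by
    intro p
    rw [Set.sInter_eq_iInter]
    simp
  have htotal : ∀ s s' : ↥c, (s : Set (G × B)) ⊆ s' ∨ (s' : Set (G × B)) ⊆ s :=
    fun s s' => hchain.total s.2 s'.2
  constructor
  · choose Γ hΓ using fun t : c => (hc t t.2).exists_subgroup
    refine ⟨⨅ t : c, Γ t, ?_⟩
    rw [Subgroup.coe_iInf, Set.sInter_eq_iInter]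
    exact Set.iInter_congr hΓ
  · exact isClosed_sInter fun s hs => (hc s hs).closed
  · intro p hp
    obtain ⟨s, hs⟩ := hne
    exact (hc s hs).compat p (hp s hs)
  · intro g
    set t : ↥c → Set (G × B) := fun s => {p ∈ (s : Set (G × B)) | p.1 = g} with ht
    have hdir : Directed (· ⊇ ·) t := by
      intro s s'
      rcases htotal s s' with h' | h'
      · exact ⟨s, subset_rfl, fun p hp => ⟨h' hp.1, hp.2⟩⟩
      · exact ⟨s', fun p hp => ⟨h' hp.1, hp.2⟩, subset_rfl⟩
    have hnonempty : ∀ s : ↥c, (t s).Nonempty := by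
      intro s
      obtain ⟨b, hb⟩ := (hc s s.2).total g
      exact ⟨(g, b), hb, rfl⟩
    have hcl : ∀ s : ↥c, IsClosed (t s) := by
      intro s
      exact ((hc s s.2).closed).inter (isClosed_singleton.preimage continuous_fst)
    obtain ⟨p, hp⟩ := IsCompact.nonempty_iInter_of_directed_nonempty_isCompact_isClosed
      t hdir hnonempty (fun s => (hcl s).isCompact) hcl
    simp only [Set.mem_iInter] at hp
    refine ⟨p.2, (hmemInt _).mpr fun s => ?_⟩
    have h1 := (hp s).2
    have h2 := (hp s).1
    rwa [show ((g : G), p.2) = p by rw [← h1]]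
  · intro i p hp hpD
    set t : ↥c → Set B := fun s => {e : B | e ∈ E i ∧ ((1 : G), e⁻¹ * p.2) ∈ (s : Set (G × B))}
      with ht
    have hdir : Directed (· ⊇ ·) t := by
      intro s s'
      rcases htotal s s' with h' | h'
      · exact ⟨s, subset_rfl, fun e he => ⟨he.1, h' he.2⟩⟩
      · exact ⟨s', fun e he => ⟨he.1, h' he.2⟩, subset_rfl⟩
    have hnonempty : ∀ s : ↥c, (t s).Nonempty := by
      intro s
      obtain ⟨e, he, he2⟩ := (hc s s.2).memmul i p (hp s s.2) hpD
      exact ⟨e, he, he2⟩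
    have hcl : ∀ s : ↥c, IsClosed (t s) := by
      intro s
      refine (hEcl i).inter (((hc s s.2).closed).preimage ?_)
      exact continuous_const.prodMk (continuous_inv.mul continuous_const)
    obtain ⟨e, he⟩ := IsCompact.nonempty_iInter_of_directed_nonempty_isCompact_isClosed
      t hdir hnonempty (fun s => (hcl s).isCompact) hcl
    simp only [Set.mem_iInter] at he
    obtain ⟨s₀, hs₀⟩ := hne
    exact ⟨e, (he ⟨s₀, hs₀⟩).1, (hmemInt _).mpr fun s => (he s).2⟩
  · intro i e he
    set t : ↥c → Set G := fun s => {g : G | g ∈ D i ∧ ((g : G), (e : B)) ∈ (s : Set (G × B))}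
      with ht
    have hdir : Directed (· ⊇ ·) t := by
      intro s s'
      rcases htotal s s' with h' | h'
      · exact ⟨s, subset_rfl, fun g hg => ⟨hg.1, h' hg.2⟩⟩
      · exact ⟨s', fun g hg => ⟨hg.1, h' hg.2⟩, subset_rfl⟩
    have hnonempty : ∀ s : ↥c, (t s).Nonempty := by
      intro s
      obtain ⟨g, hg, hg2⟩ := (hc s s.2).lifte i e he
      exact ⟨g, hg, hg2⟩
    have hcl : ∀ s : ↥c, IsClosed (t s) := by
      intro s
      refine (hDcl i).inter (((hc s s.2).closed).preimage ?_)
      exact continuous_id.prodMk continuous_const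
    obtain ⟨g, hg⟩ := IsCompact.nonempty_iInter_of_directed_nonempty_isCompact_isClosed
      t hdir hnonempty (fun s => (hcl s).isCompact) hcl
    simp only [Set.mem_iInter] at hg
    obtain ⟨s₀, hs₀⟩ := hne
    exact ⟨g, (hg ⟨s₀, hs₀⟩).1, (hmemInt _).mpr fun s => (hg s).2⟩

end ChainBase

theorem stmt4 {n : ℕ} (G : Type) [Group G] [TopologicalSpace G] [IsTopologicalGroup G]
    [CompactSpace G] [T2Space G] [TotallyDisconnectedSpace G]
    (D : Fin n → Subgroup G)
    (hclosed : ∀ i, IsClosed (D i : Set G))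
    (hgen : (⨆ i, D i).topologicalClosure = ⊤)
    (hsolve : ∀ (A B : Type) [Group A] [TopologicalSpace A] [IsTopologicalGroup A]
        [CompactSpace A] [T2Space A] [TotallyDisconnectedSpace A]
        [Group B] [TopologicalSpace B] [IsTopologicalGroup B]
        [CompactSpace B] [T2Space B] [TotallyDisconnectedSpace B] [Finite B]
        (φ : G →* A) (ψ : B →* A) (E : Fin n → Subgroup B),
        IsEmbeddingProblem D φ ψ E → ∃ γ : G →* B, IsEPSolution D φ ψ E γ)
    (A B : Type) [Group A] [TopologicalSpace A] [IsTopologicalGroup A]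
    [CompactSpace A] [T2Space A] [TotallyDisconnectedSpace A] [Finite A]
    [Group B] [TopologicalSpace B] [IsTopologicalGroup B]
    [CompactSpace B] [T2Space B] [TotallyDisconnectedSpace B]
    (φ : G →* A) (ψ : B →* A) (E : Fin n → Subgroup B)
    (hEP : IsEmbeddingProblem D φ ψ E) :
    ∃ γ : G →* B, IsEPSolution D φ ψ E γ := by
  classical
  obtain ⟨hφc, hφs, hψc, hψs, hEcl, hEgen, hbij⟩ := hEP
  set S : Set (Set (G × B)) := {s | PS D φ ψ E s} with hSdef
  have hbase : {p : G × B | ψ p.2 = φ p.1} ∈ S := PS_base hφc hψc hψs hbij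
  have hchain : ∀ c ⊆ S, IsChain (· ⊆ ·) c → c.Nonempty →
      ∃ lb ∈ S, ∀ s ∈ c, lb ⊆ s := by
    intro c hcS hch hcne
    exact ⟨⋂₀ c, PS_sInter hclosed hEcl (fun s hs => hcS hs) hch hcne,
      fun s hs => Set.sInter_subset_of_mem hs⟩
  obtain ⟨m, -, hm⟩ := zorn_superset_nonempty S hchain _ hbase
  have hmPS : PS D φ ψ E m := hm.1
  obtain ⟨Γ, hΓ⟩ := hmPS.exists_subgroup
  have hmem : ∀ p : G × B, p ∈ Γ ↔ p ∈ m := fun p => by rw [← hΓ]; rfl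
  choose σ hσ using hmPS.total
  have hsnd := hmPS.snd_surj hEgen
  have hN : ∀ b : B, ((1 : G), b) ∈ m → b = 1 := by
    by_contra hcon
    push_neg at hcon
    obtain ⟨n₀, hn₀m, hn₀⟩ := hcon
    -- a clopen normal subgroup M' ≤ ker ψ avoiding n₀
    have hkercl : IsClopen (ψ ⁻¹' {1}) :=
      ⟨(isClosed_discrete _).preimage hψc, (isOpen_discrete _).preimage hψc⟩
    haveI : TotallySeparatedSpace B := loc_compact_t2_tot_disc_iff_tot_sep.mp ‹_›
    obtain ⟨U, hU, h1U, hn₀U⟩ :=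
      exists_isClopen_of_totally_separated (α := B) (i := 1) (j := n₀) (Ne.symm hn₀)
    have hW : IsClopen (U ∩ ψ ⁻¹' {1}) := hU.inter hkercl
    have h1W : (1 : B) ∈ U ∩ ψ ⁻¹' {1} := ⟨h1U, by simp⟩
    obtain ⟨M, hM⟩ := IsTopologicalGroup.exist_openNormalSubgroup_sub_clopen_nhds_of_one hW h1W
    set M' : Subgroup B := M.toOpenSubgroup.toSubgroup with hM'def
    have hM'open : IsOpen (M' : Set B) := M.toOpenSubgroup.isOpen
    haveI hM'normal : M'.Normal := M.isNormal'
    have hM'ker : ∀ b ∈ M', ψ b = 1 := fun b hb => (hM hb).2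
    have hn₀M : n₀ ∉ M' := fun h => hn₀U (hM h).1
    -- the subgroup N of elements (1, b) ∈ Γ
    set N : Subgroup B := Γ.comap (MonoidHom.inr G B) with hNdef
    have hNmem : ∀ b : B, b ∈ N ↔ ((1 : G), b) ∈ m :=
      fun b => Iff.trans (Subgroup.mem_comap) (hmem _)
    have hNker : ∀ b ∈ N, ψ b = 1 := by
      intro b hb
      have h1 := hmPS.compat _ ((hNmem b).mp hb)
      simpa using h1
    haveI hNnormal : N.Normal := by
      constructor
      intro nb hnb b
      obtain ⟨g, hg⟩ := hsnd b
      have h1 : ((g, b) : G × B) * (1, nb) * (g, b)⁻¹ ∈ Γ :=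
        mul_mem (mul_mem ((hmem _).mpr hg) ((hmem _).mpr ((hNmem nb).mp hnb)))
          (inv_mem ((hmem _).mpr hg))
      have h2 : ((g, b) : G × B) * (1, nb) * (g, b)⁻¹ = ((1 : G), b * nb * b⁻¹) := by
        simp [Prod.ext_iff]
      rw [h2] at h1
      exact (hNmem _).mpr ((hmem _).mp h1)
    -- quotients
    haveI : DiscreteTopology (B ⧸ M') := QuotientGroup.discreteTopology (N := M') hM'open
    haveI : Finite (B ⧸ M') := Subgroup.quotient_finite_of_isOpen M' hM'open
    set mkM : B →* B ⧸ M' := QuotientGroup.mk' M' with hmkM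
    have hmkMc : Continuous mkM := continuous_quotient_mk'
    have hmkMs : Function.Surjective mkM := QuotientGroup.mk'_surjective M'
    set S₁ : Subgroup (B ⧸ M') := N.map mkM with hS₁
    haveI hS₁n : S₁.Normal := Subgroup.Normal.map hNnormal mkM hmkMs
    haveI : DiscreteTopology ((B ⧸ M') ⧸ S₁) := QuotientGroup.discreteTopology (N := S₁) (isOpen_discrete _)
    set ψ₁ : (B ⧸ M') →* (B ⧸ M') ⧸ S₁ := QuotientGroup.mk' S₁ with hψ₁
    set cmap : B →* (B ⧸ M') ⧸ S₁ := ψ₁.comp mkM with hcmap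
    have hcc : Continuous cmap := continuous_quotient_mk'.comp hmkMc
    have hcs : Function.Surjective cmap := (QuotientGroup.mk'_surjective S₁).comp hmkMs
    have hc1 : ∀ b ∈ N, cmap b = 1 := by
      intro b hb
      rw [hcmap, MonoidHom.comp_apply, ← MonoidHom.mem_ker, hψ₁, QuotientGroup.ker_mk']
      exact ⟨b, hb, rfl⟩
    have hwd : ∀ g b b', (g, b) ∈ m → (g, b') ∈ m → cmap b = cmap b' := by
      intro g b b' hb hb'
      have h1 : ((g, b) : G × B)⁻¹ * (g, b') ∈ Γ :=
        mul_mem (inv_mem ((hmem _).mpr hb)) ((hmem _).mpr hb')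
      have h2 : ((g, b) : G × B)⁻¹ * (g, b') = ((1 : G), b⁻¹ * b') := by
        simp [Prod.ext_iff]
      rw [h2] at h1
      have h3 := hc1 _ ((hNmem _).mpr ((hmem _).mp h1))
      rw [map_mul, map_inv] at h3
      exact (inv_mul_eq_one.mp h3)
    set φ₁ : G →* (B ⧸ M') ⧸ S₁ := MonoidHom.mk' (fun g => cmap (σ g)) (by
      intro g h
      have h1 : ((g * h : G), σ g * σ h) ∈ m :=
        (hmem _).mp (mul_mem ((hmem _).mpr (hσ g)) ((hmem _).mpr (hσ h)))
      show cmap (σ (g * h)) = cmap (σ g) * cmap (σ h)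
      rw [hwd _ _ _ (hσ (g * h)) h1, map_mul]) with hφ₁
    have hφ₁m : ∀ g b, (g, b) ∈ m → φ₁ g = cmap b := fun g b hb => hwd _ _ _ (hσ g) hb
    -- continuity of φ₁
    have hfibcl : ∀ a : (B ⧸ M') ⧸ S₁, IsClosed (φ₁ ⁻¹' {a}) := by
      intro a
      have himg : φ₁ ⁻¹' {a} = Prod.fst '' (m ∩ (Set.univ ×ˢ (cmap ⁻¹' {a}))) := by
        ext g
        constructor
        · intro hg
          refine ⟨(g, σ g), ⟨⟨hσ g, ?_⟩, rfl⟩⟩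
          simp only [Set.mem_prod, Set.mem_univ, true_and, Set.mem_preimage]
          exact hg
        · rintro ⟨p, ⟨hp, hpC⟩, rfl⟩
          have h1 := hφ₁m p.1 p.2 hp
          simp only [Set.mem_prod, Set.mem_univ, true_and, Set.mem_preimage,
            Set.mem_singleton_iff] at hpC
          simp only [Set.mem_preimage, Set.mem_singleton_iff]
          rw [h1]
          exact hpC
      rw [himg]
      exact (((hmPS.closed.inter (isClosed_univ.prod
        ((isClosed_discrete _).preimage hcc))).isCompact).image continuous_fst).isClosed
    have hφ₁c : Continuous φ₁ := by
      rw [continuous_iff_isClosed]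
      intro t _
      have h1 : φ₁ ⁻¹' t = ⋃ a ∈ t, φ₁ ⁻¹' {a} := by ext; simp
      rw [h1]
      exact (Set.toFinite t).isClosed_biUnion fun a _ => hfibcl a
    have hφ₁s : Function.Surjective φ₁ := by
      intro a
      obtain ⟨b, hb⟩ := hcs a
      obtain ⟨g, hg⟩ := hsnd b
      exact ⟨g, by rw [hφ₁m g b hg]; exact hb⟩
    set E₁ : Fin n → Subgroup (B ⧸ M') := fun i => (E i).map mkM with hE₁
    -- key injectivity
    have hL1 : ∀ i : Fin n, ∀ e ∈ E i, ∀ e' ∈ E i, cmap e = cmap e' → e = e' := by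
      intro i e he e' he' hcc'
      have h1 : mkM (e⁻¹ * e') ∈ S₁ := by
        have h2 : cmap (e⁻¹ * e') = 1 := by rw [map_mul, map_inv, hcc', inv_mul_cancel]
        rw [hcmap, MonoidHom.comp_apply, ← MonoidHom.mem_ker, hψ₁, QuotientGroup.ker_mk'] at h2
        exact h2
      obtain ⟨ν, hν, hνeq⟩ := h1
      have h2 : ν⁻¹ * (e⁻¹ * e') ∈ M' := by
        have h3 : mkM (ν⁻¹ * (e⁻¹ * e')) = 1 := by
          rw [map_mul, map_inv, hνeq, inv_mul_cancel]
        exact (QuotientGroup.eq_one_iff _).mp h3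
      have h4 : ψ e = ψ e' := by
        have h5 : ψ (e⁻¹ * e') = 1 := by
          have hdecomp : e⁻¹ * e' = ν * (ν⁻¹ * (e⁻¹ * e')) := by group
          rw [hdecomp, map_mul, hNker ν hν, hM'ker _ h2, one_mul]
        rw [map_mul, map_inv] at h5
        exact inv_mul_eq_one.mp h5
      exact (hbij i).injOn he he' h4
    have hEP₁ : IsEmbeddingProblem D φ₁ ψ₁ E₁ := by
      refine ⟨hφ₁c, hφ₁s, continuous_of_discreteTopology, QuotientGroup.mk'_surjective S₁,
        fun i => isClosed_discrete _, ?_, ?_⟩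
      · have h1 : ⨆ i, E₁ i = ⊤ := by
          have h2 : ⨆ i, E₁ i = (⨆ i, E i).map mkM := (Subgroup.map_iSup mkM E).symm
          rw [h2, eq_top_iff]
          intro q _
          obtain ⟨b, rfl⟩ := hmkMs q
          have hb : b ∈ closure ((⨆ i, E i : Subgroup B) : Set B) := by
            have h3 : ((⨆ i, E i).topologicalClosure : Set B) = Set.univ := by
              rw [hEgen]; rfl
            have : b ∈ ((⨆ i, E i).topologicalClosure : Set B) := h3 ▸ Set.mem_univ b
            exact this
          have hopen : IsOpen (mkM ⁻¹' {mkM b}) := (isOpen_discrete _).preimage hmkMc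
          obtain ⟨b', hb'o, hb's⟩ := mem_closure_iff.mp hb _ hopen rfl
          refine ⟨b', hb's, ?_⟩
          simpa using hb'o
        rw [h1]
        exact le_antisymm le_top (Subgroup.le_topologicalClosure ⊤)
      · intro i
        refine ⟨?_, ?_, ?_⟩
        · rintro q hq
          rw [SetLike.mem_coe, hE₁, Subgroup.mem_map] at hq
          obtain ⟨e, he, rfl⟩ := hq
          obtain ⟨g, hg, hge⟩ := hmPS.lifte i e he
          exact ⟨g, hg, hφ₁m g e hge⟩
        · intro q hq q' hq'
          rw [SetLike.mem_coe, hE₁, Subgroup.mem_map] at hq hq'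
          obtain ⟨e, he, rfl⟩ := hq
          obtain ⟨e', he', rfl⟩ := hq'
          intro hee
          have : e = e' := hL1 i e he e' he' hee
          rw [this]
        · rintro a ⟨g, hgD, rfl⟩
          obtain ⟨e, he, hν⟩ := hmPS.memmul i (g, σ g) (hσ g) hgD
          have hνN : e⁻¹ * σ g ∈ N := (hNmem _).mpr hν
          have h1 : cmap (σ g) = cmap e := by
            have h2 := hc1 _ hνN
            rw [map_mul, map_inv] at h2
            exact (inv_mul_eq_one.mp h2).symm
          refine ⟨mkM e, ?_, ?_⟩
          · rw [SetLike.mem_coe, hE₁, Subgroup.mem_map]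
            exact ⟨e, he, rfl⟩
          · show ψ₁ (mkM e) = φ₁ g
            rw [show φ₁ g = cmap (σ g) from rfl, h1]
            rfl
    obtain ⟨γ₁, hγ₁c, hγ₁s, hγ₁comm, hγ₁map⟩ := hsolve ((B ⧸ M') ⧸ S₁) (B ⧸ M') φ₁ ψ₁ E₁ hEP₁
    -- the refined partial solution
    set s' : Set (G × B) := m ∩ {p : G × B | γ₁ p.1 = mkM p.2} with hs'def
    have hL2 : ∀ i : Fin n, ∀ g ∈ D i, ∀ e ∈ E i, (g, e) ∈ m → γ₁ g = mkM e := by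
      intro i g hg e he hge
      have h1 : γ₁ g ∈ E₁ i := by
        rw [← hγ₁map i]
        exact ⟨g, hg, rfl⟩
      rw [hE₁, Subgroup.mem_map] at h1
      obtain ⟨e'', he'', heq⟩ := h1
      have h2 : cmap e'' = cmap e := by
        calc cmap e'' = ψ₁ (γ₁ g) := by rw [← heq]; rfl
        _ = φ₁ g := hγ₁comm g
        _ = cmap e := hφ₁m g e hge
      rw [← heq, hL1 i e'' he'' e he h2]
    have hs'PS : PS D φ ψ E s' := by
      constructor
      · obtain ⟨Δ, hΔ⟩ : ∃ Δ : Subgroup (G × B),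
            (Δ : Set (G × B)) = {p : G × B | γ₁ p.1 = mkM p.2} := by
          refine ⟨{ carrier := {p : G × B | γ₁ p.1 = mkM p.2}
                    one_mem' := by simp
                    mul_mem' := ?_
                    inv_mem' := ?_ }, rfl⟩
          · intro a b ha hb
            simp only [Set.mem_setOf_eq] at *
            simp [Prod.fst_mul, Prod.snd_mul, map_mul, ha, hb]
          · intro a ha
            simp only [Set.mem_setOf_eq] at *
            simp [ha]
        exact ⟨Γ ⊓ Δ, by rw [Subgroup.coe_inf, hΓ, hΔ]⟩
      · exact hmPS.closed.inter
          (isClosed_eq (hγ₁c.comp continuous_fst) (hmkMc.comp continuous_snd))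
      · exact fun p hp => hmPS.compat p hp.1
      · intro g
        have h1 : ψ₁ (γ₁ g) = ψ₁ (mkM (σ g)) := by
          rw [hγ₁comm g]
          exact hφ₁m g (σ g) (hσ g)
        have h2 : (mkM (σ g))⁻¹ * γ₁ g ∈ S₁ := by
          have h3 : ψ₁ ((mkM (σ g))⁻¹ * γ₁ g) = 1 := by
            rw [map_mul, map_inv, h1, inv_mul_cancel]
          rw [← MonoidHom.mem_ker, hψ₁, QuotientGroup.ker_mk'] at h3
          exact h3
        obtain ⟨ν, hν, hνeq⟩ := h2
        refine ⟨σ g * ν, ?_, ?_⟩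
        · have h4 : ((g, σ g) : G × B) * (1, ν) ∈ Γ :=
            mul_mem ((hmem _).mpr (hσ g)) ((hmem _).mpr ((hNmem ν).mp hν))
          have h5 : ((g, σ g) : G × B) * (1, ν) = (g * 1, σ g * ν) := rfl
          rw [h5, mul_one] at h4
          exact (hmem _).mp h4
        · show γ₁ g = mkM (σ g * ν)
          rw [map_mul, hνeq, mul_inv_cancel_left]
      · intro i p hp hpD
        obtain ⟨e, he, hν⟩ := hmPS.memmul i p hp.1 hpD
        have hνN : e⁻¹ * p.2 ∈ N := (hNmem _).mpr hν
        have h1 : γ₁ p.1 ∈ E₁ i := by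
          rw [← hγ₁map i]
          exact ⟨p.1, hpD, rfl⟩
        rw [hE₁, Subgroup.mem_map] at h1
        obtain ⟨e'', he'', heq⟩ := h1
        have hce : cmap p.2 = cmap e := by
          have h2 := hc1 _ hνN
          rw [map_mul, map_inv] at h2
          exact (inv_mul_eq_one.mp h2).symm
        have hcee : cmap e'' = cmap e := by
          calc cmap e'' = ψ₁ (γ₁ p.1) := by rw [← heq]; rfl
          _ = φ₁ p.1 := hγ₁comm p.1
          _ = cmap p.2 := hφ₁m p.1 p.2 hp.1
          _ = cmap e := hce
        have he2 : e'' = e := hL1 i e'' he'' e he hcee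
        have hMmem : e⁻¹ * p.2 ∈ M' := by
          have h3 : mkM (e⁻¹ * p.2) = 1 := by
            rw [map_mul, map_inv, ← he2, heq, hp.2, inv_mul_cancel]
          exact (QuotientGroup.eq_one_iff _).mp h3
        refine ⟨e, he, hν, ?_⟩
        show γ₁ 1 = mkM (e⁻¹ * p.2)
        rw [map_one]
        exact ((QuotientGroup.eq_one_iff _).mpr hMmem).symm
      · intro i e he
        obtain ⟨g, hg, hge⟩ := hmPS.lifte i e he
        exact ⟨g, hg, hge, hL2 i g hg e he hge⟩
    have hle : m ⊆ s' := hm.2 hs'PS Set.inter_subset_left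
    have h1 : ((1 : G), n₀) ∈ s' := hle hn₀m
    have h2 : γ₁ 1 = mkM n₀ := h1.2
    rw [map_one] at h2
    exact hn₀M ((QuotientGroup.eq_one_iff n₀).mp h2.symm)

  have huniq : ∀ g b, (g, b) ∈ m → b = σ g := by
    intro g b hb
    have h1 : ((g, σ g) : G × B)⁻¹ * (g, b) ∈ Γ :=
      mul_mem (inv_mem ((hmem _).mpr (hσ g))) ((hmem _).mpr hb)
    have h2 : ((g, σ g) : G × B)⁻¹ * (g, b) = ((1 : G), (σ g)⁻¹ * b) := by
      simp [Prod.ext_iff]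
    rw [h2] at h1
    have h3 := hN _ ((hmem _).mp h1)
    rw [inv_mul_eq_one] at h3
    exact h3.symm
  have hmul : ∀ g h : G, σ (g * h) = σ g * σ h := by
    intro g h
    have h1 : ((g * h : G), σ g * σ h) ∈ m := by
      have := mul_mem ((hmem _).mpr (hσ g)) ((hmem _).mpr (hσ h))
      exact (hmem _).mp this
    exact (huniq _ _ h1).symm
  refine ⟨MonoidHom.mk' σ hmul, ?_, ?_, ?_, ?_⟩
  · rw [continuous_iff_isClosed]
    intro C hC
    have himg : σ ⁻¹' C = Prod.fst '' (m ∩ (Set.univ ×ˢ C)) := by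
      ext g
      constructor
      · intro hg
        exact ⟨(g, σ g), ⟨hσ g, by simpa using hg⟩, rfl⟩
      · rintro ⟨p, ⟨hp, hpC⟩, rfl⟩
        have : p.2 = σ p.1 := huniq p.1 p.2 hp
        simp only [Set.mem_preimage]
        rw [← this]
        exact hpC.2
    show IsClosed (σ ⁻¹' C)
    rw [himg]
    exact (((hmPS.closed.inter (isClosed_univ.prod hC)).isCompact).image continuous_fst).isClosed
  · intro b
    obtain ⟨g, hg⟩ := hmPS.snd_surj hEgen b
    exact ⟨g, (huniq g b hg).symm⟩
  · intro x
    exact hmPS.compat _ (hσ x)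
  · intro i
    apply le_antisymm
    · intro y hy
      rw [Subgroup.mem_map] at hy
      obtain ⟨g, hg, rfl⟩ := hy
      obtain ⟨e, he, hmm⟩ := hmPS.memmul i (g, σ g) (hσ g) hg
      have h1 : e⁻¹ * σ g = 1 := hN _ hmm
      rw [inv_mul_eq_one] at h1
      show σ g ∈ E i
      exact h1 ▸ he
    · intro e he
      obtain ⟨g, hg, hge⟩ := hmPS.lifte i e he
      rw [Subgroup.mem_map]
      exact ⟨g, hg, (huniq g e hge).symm⟩
end

section
/- Let p be a prime and G_1, …, G_n pro-p groups. Let G* denote their free product in the category of all profinite groups and G*ᵖ their free product in the category of pro-p groups, and let α : G* → G*ᵖ be the continuous epimorphism whose restriction to each G_i is the identity. Then α has a continuous group-theoretic section α' : G*ᵖ → G*; in particular, the free pro-p product G*ᵖ embeds as a closed subgroup of the free profinite product G*. -/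
open CategoryTheory

namespace Stmt19Aux

variable {Gs : Type} [Group Gs] [TopologicalSpace Gs]

/-- Transition map between quotients by open normal subgroups. -/
def trans (N M : OpenNormalSubgroup Gs) (h : N ≤ M) :
    (Gs ⧸ N.toSubgroup) →* (Gs ⧸ M.toSubgroup) :=
  QuotientGroup.map _ _ (MonoidHom.id Gs) (fun x hx => Subgroup.mem_comap.mpr (h hx))

@[simp] lemma trans_mk (N M : OpenNormalSubgroup Gs) (h : N ≤ M) (x : Gs) :
    trans N M h (QuotientGroup.mk x) = QuotientGroup.mk x := by
  simp [trans, QuotientGroup.map_mk]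

lemma trans_id (N : OpenNormalSubgroup Gs) (h : N ≤ N) :
    trans N N h = MonoidHom.id _ := by
  ext x
  simp

lemma trans_comp (N M O : OpenNormalSubgroup Gs) (h1 : N ≤ M) (h2 : M ≤ O) :
    (trans M O h2).comp (trans N M h1) = trans N O (h1.trans h2) := by
  ext x
  simp

variable (p : ℕ) {n : ℕ} (K : Subgroup Gs) (D : Fin n → Subgroup Gs)

/-- The finite set of approximations at level `N`. -/
def Xc (N : OpenNormalSubgroup Gs) : Type :=
  {σ : Subgroup (Gs ⧸ N.toSubgroup) × (Fin n → Gs ⧸ N.toSubgroup) //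
    IsPGroup p σ.1 ∧
    (∀ i, σ.2 i ∈ K.map (QuotientGroup.mk' N.toSubgroup)) ∧
    ∀ i, ∀ d ∈ D i, σ.2 i * QuotientGroup.mk d * (σ.2 i)⁻¹ ∈ σ.1}

def Xmap {N M : OpenNormalSubgroup Gs} (h : N ≤ M) : Xc p K D N → Xc p K D M :=
  fun σ => ⟨(σ.1.1.map (trans N M h), fun i => trans N M h (σ.1.2 i)), by
    obtain ⟨⟨S, g⟩, hS, hK, hDc⟩ := σ
    refine ⟨hS.map _, fun i => ?_, fun i d hd => ?_⟩
    · obtain ⟨k, hk, hkeq⟩ := hK i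
      refine ⟨k, hk, ?_⟩
      simp only [QuotientGroup.mk'_apply] at hkeq ⊢
      rw [← hkeq, trans_mk]
    · have h2 : trans N M h (g i * QuotientGroup.mk d * (g i)⁻¹) ∈
        S.map (trans N M h) := Subgroup.mem_map_of_mem _ (hDc i d hd)
      simpa using h2⟩

/-- The inverse system of approximations. -/
def F : ((OpenNormalSubgroup Gs)ᵒᵈ)ᵒᵖ ⥤ Type where
  obj j := Xc p K D (OrderDual.ofDual j.unop)
  map {j j'} f := TypeCat.ofHom (Xmap p K D (leOfHom f.unop))
  map_id j := by
    apply ConcreteCategory.hom_ext; intro σ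
    apply Subtype.ext
    refine Prod.ext ?_ ?_
    · show (σ.1.1.map (trans _ _ _)) = σ.1.1
      rw [trans_id, Subgroup.map_id]
    · funext i
      show trans _ _ _ (σ.1.2 i) = σ.1.2 i
      rw [trans_id]; rfl
  map_comp {j j' j''} f g := by
    apply ConcreteCategory.hom_ext; intro σ
    apply Subtype.ext
    refine Prod.ext ?_ ?_
    · show σ.1.1.map (trans _ _ _) = (σ.1.1.map (trans _ _ _)).map (trans _ _ _)
      rw [Subgroup.map_map, trans_comp]
    · funext i
      show trans _ _ _ (σ.1.2 i) = trans _ _ _ (trans _ _ _ (σ.1.2 i))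
      rw [← MonoidHom.comp_apply, trans_comp]

end Stmt19Aux

/-- A topological group is pro-`p` if every open normal subgroup has `p`-power index,
i.e. every finite continuous quotient is a `p`-group. -/
def IsProP (p : ℕ) (H : Type) [Group H] [TopologicalSpace H] : Prop :=
  ∀ (U : Subgroup H), ∀ _ : U.Normal, IsOpen (U : Set H) → IsPGroup p (H ⧸ U)

/-- `G` with closed subgroups `D i` is the free pro-`p` product of the `D i`:
the same universal property, with `H` ranging over pro-`p` groups. -/
def IsFreeProPProduct (p : ℕ) {n : ℕ} (G : Type) [Group G] [TopologicalSpace G]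
    [IsTopologicalGroup G] (D : Fin n → Subgroup G) : Prop :=
  (∀ i, IsClosed (D i : Set G)) ∧
  (⨆ i, D i).topologicalClosure = ⊤ ∧
  ∀ (H : Type) [Group H] [TopologicalSpace H] [IsTopologicalGroup H] [CompactSpace H]
      [T2Space H] [TotallyDisconnectedSpace H], IsProP p H →
    ∀ (η : ∀ i, ↥(D i) →* H), (∀ i, Continuous (η i)) →
    ∃! φ : G →* H, Continuous φ ∧ ∀ i (x : ↥(D i)), φ x = η i x

theorem stmt19 {n : ℕ} (p : ℕ) (hp : p.Prime)
    -- `G*` is the free profinite product of the pro-`p` groups `G_i` (realized as its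
    -- closed subgroups `D i`)
    (Gstar : Type) [Group Gstar] [TopologicalSpace Gstar] [IsTopologicalGroup Gstar]
    [CompactSpace Gstar] [T2Space Gstar] [TotallyDisconnectedSpace Gstar]
    (D : Fin n → Subgroup Gstar)
    (hD : ∀ i, IsProP p ↥(D i))
    (hfree : IsFreeProfiniteProduct Gstar D)
    -- `G*ᵖ` is the free pro-`p` product of the same groups (realized as its closed
    -- subgroups `E i`, identified with the `D i` via the continuous isomorphisms `e i`)
    (Gp : Type) [Group Gp] [TopologicalSpace Gp] [IsTopologicalGroup Gp]
    [CompactSpace Gp] [T2Space Gp] [TotallyDisconnectedSpace Gp]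
    (E : Fin n → Subgroup Gp) (hGp : IsProP p Gp)
    (hfreep : IsFreeProPProduct p Gp E)
    (e : ∀ i, ↥(D i) ≃* ↥(E i))
    (he : ∀ i, Continuous (e i) ∧ Continuous (e i).symm)
    -- `α : G* → G*ᵖ` is the continuous epimorphism restricting to the identity on each `G_i`
    (α : Gstar →* Gp) (hαcont : Continuous α) (hαsurj : Function.Surjective α)
    (hα : ∀ (i : Fin n) (x : ↥(D i)), α x = (e i x : Gp)) :
    ∃ α' : Gp →* Gstar, Continuous α' ∧ ∀ y, α (α' y) = y := by
  classical
  haveI : Fact p.Prime := ⟨hp⟩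
  set K : Subgroup Gstar := α.ker with hKdef
  haveI hFinQ : ∀ N : OpenNormalSubgroup Gstar, Finite (Gstar ⧸ N.toSubgroup) := fun N =>
    Subgroup.quotient_finite_of_isOpen _ N.toOpenSubgroup.isOpen
  -- Nonemptiness of the approximation sets, by finite Sylow theory.
  have hne : ∀ N : OpenNormalSubgroup Gstar, Nonempty (Stmt19Aux.Xc p K D N) := by
    intro N
    set Q := Gstar ⧸ N.toSubgroup with hQdef
    set π : Gstar →* Q := QuotientGroup.mk' N.toSubgroup with hπdef
    set Kb : Subgroup Q := K.map π with hKbdef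
    haveI hKbn : Kb.Normal :=
      Subgroup.Normal.map (MonoidHom.normal_ker α) π (QuotientGroup.mk'_surjective _)
    -- the quotient `Q ⧸ Kb` is a `p`-group
    have hQK : IsPGroup p (Q ⧸ Kb) := by
      set W : Subgroup Gp := N.toSubgroup.map α with hWdef
      haveI hWn : W.Normal := Subgroup.Normal.map inferInstance α hαsurj
      have hWc : IsClosed (W : Set Gp) := by
        have h1 : (W : Set Gp) = α '' N.toSubgroup := Subgroup.coe_map α _
        rw [h1]
        exact (N.toOpenSubgroup.isClosed.isCompact.image hαcont).isClosed
      have hsurj2 : Function.Surjective (QuotientGroup.map N.toSubgroup W α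
          (fun x hx => Subgroup.mem_comap.mpr (Subgroup.mem_map_of_mem α hx))) := by
        intro y
        induction y using QuotientGroup.induction_on with
        | H z =>
          obtain ⟨x, rfl⟩ := hαsurj z
          exact ⟨QuotientGroup.mk x, by rw [QuotientGroup.map_mk]⟩
      haveI : Finite (Gp ⧸ W) := Finite.of_surjective _ hsurj2
      haveI : W.FiniteIndex := W.finiteIndex_of_finite_quotient
      have hWopen : IsOpen (W : Set Gp) := W.isOpen_of_isClosed_of_finiteIndex hWc
      have hPW := hGp W hWn hWopen
      intro q
      induction q using QuotientGroup.induction_on with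
      | H x =>
        induction x using QuotientGroup.induction_on with
        | H z =>
          obtain ⟨k, hk⟩ := hPW (QuotientGroup.mk (α z))
          refine ⟨k, ?_⟩
          have hzW : α z ^ p ^ k ∈ W := by
            rw [← QuotientGroup.eq_one_iff, QuotientGroup.mk_pow]
            exact hk
          obtain ⟨ν, hν, hνeq⟩ := Subgroup.mem_map.mp hzW
          have hzν : z ^ p ^ k * ν⁻¹ ∈ K := by
            have : α (z ^ p ^ k * ν⁻¹) = 1 := by
              rw [map_mul, map_inv, map_pow, hνeq]
              group
            exact this
          have hmem : (QuotientGroup.mk (z ^ p ^ k) : Q) ∈ Kb := by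
            have h1 : (QuotientGroup.mk (z ^ p ^ k * ν⁻¹) : Q) ∈ Kb := by
              have := Subgroup.mem_map_of_mem π hzν
              exact this
            have h2 : (QuotientGroup.mk (z ^ p ^ k) : Q) =
                QuotientGroup.mk (z ^ p ^ k * ν⁻¹) := by
              rw [QuotientGroup.eq]
              simpa using N.toSubgroup.inv_mem hν
            rw [h2]; exact h1
          rw [← QuotientGroup.mk_pow, ← QuotientGroup.mk_pow, QuotientGroup.eq_one_iff]
          exact hmem
    -- a Sylow subgroup of `Q`
    obtain ⟨P⟩ : Nonempty (Sylow p Q) := inferInstance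
    haveI : Finite (Sylow p Q) := inferInstance
    have hPtop : (P : Subgroup Q) ⊔ Kb = ⊤ := by
      have hnp : ¬ p ∣ (P : Subgroup Q).index := P.not_dvd_index
      obtain ⟨m, hm⟩ := (IsPGroup.iff_card (p := p) (G := Q ⧸ Kb)).mp hQK
      have hmap : (((P : Subgroup Q) ⊔ Kb).map (QuotientGroup.mk' Kb)).index
          = ((P : Subgroup Q) ⊔ Kb).index := by
        refine Subgroup.index_map_eq _ (QuotientGroup.mk'_surjective _) ?_
        rw [QuotientGroup.ker_mk']
        exact le_sup_right
      have hdvd : ((P : Subgroup Q) ⊔ Kb).index ∣ p ^ m := by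
        rw [← hmap, ← hm]
        exact Subgroup.index_dvd_card _
      have hnd : ¬ p ∣ ((P : Subgroup Q) ⊔ Kb).index := fun hdvd' =>
        hnp (dvd_trans hdvd' (Subgroup.index_dvd_of_le le_sup_left))
      have h1 : ((P : Subgroup Q) ⊔ Kb).index = 1 :=
        Nat.Coprime.eq_one_of_dvd
          (Nat.Coprime.pow_right m (((Nat.Prime.coprime_iff_not_dvd hp).mpr hnd).symm)) hdvd
      exact Subgroup.index_eq_one.mp h1
    have hex : ∀ i : Fin n, ∃ kk : Q, kk ∈ Kb ∧
        ∀ d ∈ D i, kk * QuotientGroup.mk d * kk⁻¹ ∈ (P : Subgroup Q) := by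
      intro i
      -- the image of `D i` in `Q` is a `p`-group
      have hDb : IsPGroup p ((D i).map π) := by
        intro x
        obtain ⟨d, hd, hdx⟩ := Subgroup.mem_map.mp x.2
        set U : Subgroup ↥(D i) := N.toSubgroup.comap (D i).subtype with hUdef
        have hUopen : IsOpen (U : Set ↥(D i)) := by
          have h1 : (U : Set ↥(D i)) = ((D i).subtype) ⁻¹' N.toSubgroup :=
            Subgroup.coe_comap _ _
          rw [h1]
          exact N.toOpenSubgroup.isOpen.preimage continuous_subtype_val
        obtain ⟨k, hk⟩ := hD i U inferInstance hUopen (QuotientGroup.mk (⟨d, hd⟩ : ↥(D i)))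
        refine ⟨k, ?_⟩
        have hdN : d ^ p ^ k ∈ N.toSubgroup := by
          have h2 : (⟨d, hd⟩ : ↥(D i)) ^ p ^ k ∈ U := by
            rw [← QuotientGroup.eq_one_iff, QuotientGroup.mk_pow]
            exact hk
          exact h2
        apply Subtype.ext
        have hxd : (x : Q) = QuotientGroup.mk d := by
          rw [← hdx]; rfl
        show ((x : Q) ^ p ^ k) = 1
        rw [hxd, ← QuotientGroup.mk_pow, QuotientGroup.eq_one_iff]
        exact hdN
      obtain ⟨Qi, hQi⟩ := hDb.exists_le_sylow
      obtain ⟨q, hq⟩ := MulAction.exists_smul_eq Q Qi P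
      have hqc : ∀ d ∈ D i, q * QuotientGroup.mk d * q⁻¹ ∈ (P : Subgroup Q) := by
        intro d hd
        have h1 : (QuotientGroup.mk d : Q) ∈ (Qi : Subgroup Q) := by
          apply hQi
          exact Subgroup.mem_map_of_mem π hd
        have h2 := Subgroup.smul_mem_pointwise_smul _ (MulAut.conj q) _ h1
        rw [← hq, Sylow.coe_subgroup_smul]
        simpa [MulAut.smul_def, MulAut.conj_apply] using h2
      have hqT : q ∈ ((P : Subgroup Q) ⊔ Kb : Subgroup Q) := by
        rw [hPtop]; exact Subgroup.mem_top q
      rw [← SetLike.mem_coe, Subgroup.mul_normal] at hqT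
      obtain ⟨s, hs, k, hk, rfl⟩ := hqT
      refine ⟨k, hk, fun d hd => ?_⟩
      have h3 := hqc d hd
      have h4 : k * QuotientGroup.mk d * k⁻¹ =
          s⁻¹ * (s * k * QuotientGroup.mk d * (s * k)⁻¹) * s := by
        group
      rw [h4]
      exact Subgroup.mul_mem _ (Subgroup.mul_mem _ (Subgroup.inv_mem _ hs) h3) hs
    choose kk hkk1 hkk2 using hex
    exact ⟨⟨((P : Subgroup Q), kk), P.2, hkk1, hkk2⟩⟩
  -- Take a compatible family in the inverse system.
  haveI inst1 : ∀ j, Finite ((Stmt19Aux.F p K D (Gs := Gstar)).obj j) := by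
    intro j
    dsimp [Stmt19Aux.F, Stmt19Aux.Xc]
    haveI := hFinQ (OrderDual.ofDual j.unop)
    exact Subtype.finite
  haveI inst2 : ∀ j, Nonempty ((Stmt19Aux.F p K D (Gs := Gstar)).obj j) := fun j =>
    hne (OrderDual.ofDual j.unop)
  obtain ⟨u, hu⟩ := nonempty_sections_of_finite_inverse_system (Stmt19Aux.F p K D (Gs := Gstar))
  set uu : ∀ N : OpenNormalSubgroup Gstar, Stmt19Aux.Xc p K D N :=
    fun N => u (Opposite.op (OrderDual.toDual N)) with huudef
  have hcompat : ∀ {N M : OpenNormalSubgroup Gstar} (h : N ≤ M),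
      Stmt19Aux.Xmap p K D h (uu N) = uu M := by
    intro N M h
    exact hu ((homOfLE (show OrderDual.toDual M ≤ OrderDual.toDual N from h)).op)
  have hScomp : ∀ {N M : OpenNormalSubgroup Gstar} (h : N ≤ M),
      (uu M).1.1 = ((uu N).1.1).map (Stmt19Aux.trans N M h) := by
    intro N M h
    rw [← hcompat h]
    rfl
  have hgcomp : ∀ {N M : OpenNormalSubgroup Gstar} (h : N ≤ M) (i : Fin n),
      Stmt19Aux.trans N M h ((uu N).1.2 i) = (uu M).1.2 i := by
    intro N M h i
    rw [← hcompat h]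
    rfl
  -- The pro-`p` subgroup `S` of `Gstar`.
  set S : Subgroup Gstar :=
    ⨅ N : OpenNormalSubgroup Gstar,
      Subgroup.comap (QuotientGroup.mk' N.toSubgroup) (uu N).1.1 with hSdef
  have hSmem : ∀ x : Gstar, x ∈ S ↔
      ∀ N : OpenNormalSubgroup Gstar, (QuotientGroup.mk x : Gstar ⧸ N.toSubgroup) ∈ (uu N).1.1 := by
    intro x
    simp [hSdef, Subgroup.mem_iInf, Subgroup.mem_comap]
  have hSclosed : IsClosed (S : Set Gstar) := by
    have h1 : (S : Set Gstar) = ⋂ N : OpenNormalSubgroup Gstar,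
        (Subgroup.comap (QuotientGroup.mk' N.toSubgroup) (uu N).1.1 : Set Gstar) := by
      rw [hSdef]; exact Subgroup.coe_iInf
    rw [h1]
    refine isClosed_iInter fun N => ?_
    refine Subgroup.isClosed_of_isOpen _ (Subgroup.isOpen_mono ?_ N.toOpenSubgroup.isOpen)
    intro x hx
    rw [Subgroup.mem_comap]
    have : (QuotientGroup.mk x : Gstar ⧸ N.toSubgroup) = 1 := (QuotientGroup.eq_one_iff x).mpr hx
    show (QuotientGroup.mk x : Gstar ⧸ N.toSubgroup) ∈ (uu N).1.1
    rw [this]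
    exact (uu N).1.1.one_mem
  -- K is closed
  have hKclosed : IsClosed (K : Set Gstar) := by
    have h1 : (K : Set Gstar) = α ⁻¹' {1} := by
      ext x
      simp [hKdef, MonoidHom.mem_ker]
    rw [h1]
    exact IsClosed.preimage hαcont isClosed_singleton
  -- realize the elements `g i ∈ K` by compactness
  haveI : Nonempty (OpenNormalSubgroup Gstar) :=
    ⟨{ toOpenSubgroup := ⊤, isNormal' := by show (⊤ : Subgroup Gstar).Normal; infer_instance }⟩
  have hgex : ∀ i : Fin n, ∃ g : Gstar, g ∈ K ∧
      ∀ N : OpenNormalSubgroup Gstar,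
        (QuotientGroup.mk g : Gstar ⧸ N.toSubgroup) = (uu N).1.2 i := by
    intro i
    set C : OpenNormalSubgroup Gstar → Set Gstar := fun N =>
      {x | x ∈ K ∧ (QuotientGroup.mk x : Gstar ⧸ N.toSubgroup) = (uu N).1.2 i} with hCdef
    have hmono : ∀ {N M : OpenNormalSubgroup Gstar}, N ≤ M → C N ⊆ C M := by
      intro N M h x hx
      refine ⟨hx.1, ?_⟩
      rw [← hgcomp h i, ← hx.2, Stmt19Aux.trans_mk]
    have hCne : ∀ N, (C N).Nonempty := by
      intro N
      obtain ⟨k, hk, hkeq⟩ := (uu N).2.2.1 i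
      exact ⟨k, hk, by simpa using hkeq⟩
    have hCclosed : ∀ N, IsClosed (C N) := by
      intro N
      obtain ⟨k₀, hk₀, hk₀eq⟩ := hCne N
      have h1 : C N = (K : Set Gstar) ∩ ((fun x => x⁻¹ * k₀) ⁻¹' (N.toSubgroup : Set Gstar)) := by
        ext x
        simp only [hCdef, Set.mem_setOf_eq, Set.mem_inter_iff, SetLike.mem_coe,
          Set.mem_preimage]
        constructor
        · rintro ⟨h2, h3⟩
          refine ⟨h2, ?_⟩
          rw [← QuotientGroup.eq]
          rw [h3, hk₀eq]
        · rintro ⟨h2, h3⟩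
          refine ⟨h2, ?_⟩
          rw [← hk₀eq]
          exact QuotientGroup.eq.mpr h3
      rw [h1]
      exact hKclosed.inter (IsClosed.preimage (continuous_inv.mul continuous_const)
        N.toOpenSubgroup.isClosed)
    have hdir : Directed (· ⊇ ·) C := by
      intro N M
      exact ⟨N ⊓ M, hmono inf_le_left, hmono inf_le_right⟩
    obtain ⟨g, hg⟩ := IsCompact.nonempty_iInter_of_directed_nonempty_isCompact_isClosed
      C hdir hCne (fun N => (hCclosed N).isCompact) hCclosed
    have hg' : ∀ N, g ∈ C N := by
      intro N
      exact Set.mem_iInter.mp hg N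
    exact ⟨g, (hg' (Classical.arbitrary _)).1, fun N => (hg' N).2⟩
  choose g hgK hgmk using hgex
  -- conjugates of `D i` by `g i` are inside `S`
  have hconj : ∀ i : Fin n, ∀ d ∈ D i, g i * d * (g i)⁻¹ ∈ S := by
    intro i d hd
    rw [hSmem]
    intro N
    have h1 := (uu N).2.2.2 i d hd
    rw [← hgmk i N] at h1
    have h2 : (QuotientGroup.mk (g i * d * (g i)⁻¹) : Gstar ⧸ N.toSubgroup) =
        QuotientGroup.mk (g i) * QuotientGroup.mk d * (QuotientGroup.mk (g i))⁻¹ := by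
      rw [QuotientGroup.mk_mul, QuotientGroup.mk_mul, QuotientGroup.mk_inv]
    rw [h2]
    exact h1
  -- `S` is a pro-`p` group
  haveI hScompact : CompactSpace ↥S := isCompact_iff_compactSpace.mp hSclosed.isCompact
  have hSpro : IsProP p ↥S := by
    intro U hUnorm hUopen
    intro q
    induction q using QuotientGroup.induction_on with
    | H s =>
      obtain ⟨V, hVopen, hVeq⟩ := isOpen_induced_iff.mp hUopen
      have h1V : (1 : Gstar) ∈ V := by
        have h2 : (1 : ↥S) ∈ (U : Set ↥S) := U.one_mem
        rw [← hVeq] at h2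
        exact h2
      obtain ⟨W, hW, h1W, hWV⟩ := compact_exists_isClopen_in_isOpen hVopen h1V
      obtain ⟨N, hN⟩ := IsTopologicalGroup.exist_openNormalSubgroup_sub_clopen_nhds_of_one hW h1W
      have hmem : (QuotientGroup.mk (s : Gstar) : Gstar ⧸ N.toSubgroup) ∈ (uu N).1.1 :=
        (hSmem _).mp s.2 N
      obtain ⟨k, hk⟩ := (uu N).2.1 ⟨_, hmem⟩
      refine ⟨k, ?_⟩
      have hk' : ((QuotientGroup.mk (s : Gstar) : Gstar ⧸ N.toSubgroup)) ^ p ^ k = 1 := by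
        have := congrArg (Subtype.val) hk
        simpa using this
      have hsN : ((s : Gstar)) ^ p ^ k ∈ N.toSubgroup := by
        rw [← QuotientGroup.eq_one_iff, QuotientGroup.mk_pow]
        exact hk'
      have hsU : s ^ p ^ k ∈ U := by
        have hmemV : ((s ^ p ^ k : ↥S) : Gstar) ∈ V := by
          apply hWV
          apply hN
          exact hsN
        show s ^ p ^ k ∈ (U : Set ↥S)
        rw [← hVeq]
        exact hmemV
      rw [← QuotientGroup.mk_pow, QuotientGroup.eq_one_iff]
      exact hsU
  -- the maps `η i : E i →* S`
  have hmemS : ∀ (i : Fin n) (x : ↥(E i)),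
      g i * ((((e i).symm x : ↥(D i)) : Gstar)) * (g i)⁻¹ ∈ S := fun i x =>
    hconj i _ ((e i).symm x).2
  set η : ∀ i : Fin n, ↥(E i) →* ↥S := fun i =>
    { toFun := fun x => ⟨g i * ((((e i).symm x : ↥(D i)) : Gstar)) * (g i)⁻¹, hmemS i x⟩
      map_one' := by
        apply Subtype.ext
        simp
      map_mul' := by
        intro x y
        apply Subtype.ext
        push_cast [map_mul]
        group } with hηdef
  have hηc : ∀ i, Continuous (η i) := by
    intro i
    apply Continuous.subtype_mk
    exact (continuous_const.mul (continuous_subtype_val.comp (he i).2)).mul continuous_const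
  obtain ⟨φ, ⟨hφc, hφη⟩, -⟩ := hfreep.2.2 ↥S hSpro η hηc
  refine ⟨S.subtype.comp φ, continuous_subtype_val.comp hφc, ?_⟩
  obtain ⟨ψ₀, hψ₀, huniqψ⟩ := hfreep.2.2 Gp hGp (fun i => (E i).subtype)
    (fun i => continuous_subtype_val)
  have h1 : α.comp (S.subtype.comp φ) = ψ₀ := by
    apply huniqψ
    constructor
    · exact hαcont.comp (continuous_subtype_val.comp hφc)
    · intro i x
      have h2 : φ x = η i x := hφη i x
      show α ((φ x : Gstar)) = _
      rw [h2]
      show α (g i * ((((e i).symm x : ↥(D i)) : Gstar)) * (g i)⁻¹) = _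
      have hgi1 : α (g i) = 1 := hgK i
      rw [map_mul, map_mul, map_inv, hgi1, hα i ((e i).symm x)]
      simp
  have h2 : MonoidHom.id Gp = ψ₀ := by
    apply huniqψ
    exact ⟨continuous_id, fun i x => rfl⟩
  intro y
  have h3 := DFunLike.congr_fun (h1.trans h2.symm) y
  exact h3
end
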